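/- Given a 3-PARTITION instance (x_1,…,x_{3n}; B) with additionally x_i > n for all i, let K = nB and construct the following discrete instance, where a 'K-block' consists of K consecutive items together with K fresh agents each of whom values exactly those K items: from left to right the items are B consecutive K-blocks (the left region), followed by n blocks of K+B items each, where each such block consists of a K-block followed by B further items (the right region); in addition there are agents a_1,…,a_{3n}, where agent a_i values exactly the K·x_i rightmost items. Then: (i) this instance admits a contiguous equitable allocation in which every agent receives strictly positive value if and only if the 3-PARTITION instance has a solution; and (ii) this instance admits a contiguous allocation that is both proportional and equitable if and only if the 3-PARTITION instance has a solution. -/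
import Mathlib


/-- `owner` is a contiguous allocation of the items `Fin M` (items numbered from left to
right) to the agents of type `A`: each agent's set of items is a (possibly empty) set of
consecutive items. -/
def ContigAlloc {M : ℕ} {A : Type*} (owner : Fin M → A) : Prop :=
  ∀ (a : A) (t₁ t₂ t₃ : Fin M), t₁ ≤ t₂ → t₂ ≤ t₃ →
    owner t₁ = a → owner t₃ = a → owner t₂ = a

open Classical in
/-- The (normalized) value that agent `a` assigns to the bundle received by agent `b`
under the allocation `owner`, where `V a` is the set of items valued by agent `a`:
`|A_b ∩ V_a| / |V_a|`. -/
noncomputable def discVal {M : ℕ} {A : Type*} (V : A → Finset (Fin M))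
    (owner : Fin M → A) (a b : A) : ℝ :=
  (((V a).filter fun t => owner t = b).card : ℝ) / ((V a).card : ℝ)

/-- Left endpoint (item index) of the `t`-th `K`-block, `K = n*B`: the first `B` blocks
form the left region (consecutive `K`-blocks); block `B + s` is the `K`-block starting
the `s`-th block of `K + B` items of the right region. -/
def kBlockStart (n B : ℕ) (t : Fin (B + n)) : ℕ :=
  if t.val < B then t.val * (n * B) else B * (n * B) + (t.val - B) * (n * B + B)

/-- Valued sets of the discrete instance built from a 3-PARTITION instance `(x; B)` with
`K = n*B`: agents `Sum.inl (t, _)` are the `K` agents of the `t`-th `K`-block, each valuing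
exactly the `K` items of that block; agent `Sum.inr i` is `a_i`, valuing exactly the
`K * x i` rightmost items. -/
def equitV (n B : ℕ) (x : Fin (3 * n) → ℕ) :
    ((Fin (B + n) × Fin (n * B)) ⊕ Fin (3 * n)) →
      Finset (Fin (B * (n * B) + n * (n * B + B)))
  | .inl (t, _) => Finset.univ.filter fun j =>
      kBlockStart n B t ≤ j.val ∧ j.val < kBlockStart n B t + n * B
  | .inr i => Finset.univ.filter fun j =>
      B * (n * B) + n * (n * B + B) - (n * B) * x i ≤ j.val

lemma card_filter_val {M : ℕ} (p : ℕ → Prop) [DecidablePred p] :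
    (Finset.univ.filter fun j : Fin M => p j.val).card
      = ((Finset.range M).filter p).card := by
  rw [Finset.card_filter, Finset.card_filter,
    Fin.sum_univ_eq_sum_range (fun v => if p v then 1 else 0)]

lemma card_interval {M a b : ℕ} (h : b ≤ M) :
    (Finset.univ.filter fun j : Fin M => a ≤ j.val ∧ j.val < b).card = b - a := by
  rw [card_filter_val (fun v => a ≤ v ∧ v < b)]
  have : (Finset.range M).filter (fun v => a ≤ v ∧ v < b) = Finset.Ico a b := by
    ext v; simp only [Finset.mem_filter, Finset.mem_range, Finset.mem_Ico]; omega
  rw [this, Nat.card_Ico]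

lemma card_tail {M c : ℕ} :
    (Finset.univ.filter fun j : Fin M => c ≤ j.val).card = M - c := by
  rw [card_filter_val (fun v => c ≤ v)]
  have : (Finset.range M).filter (fun v => c ≤ v) = Finset.Ico c M := by
    ext v; simp only [Finset.mem_filter, Finset.mem_range, Finset.mem_Ico]; omega
  rw [this, Nat.card_Ico]

section Pick

variable {N : ℕ} (x : Fin N → ℕ) (S : Finset (Fin N))

/-- prefix sum: total of `x` over elements of `S` strictly below `i`. -/
def loSum (i : Fin N) : ℕ := ∑ i' ∈ S.filter (fun i' => i' < i), x i'

/-- the element of `S` whose tile `[loSum i, loSum i + x i)` contains `q`. -/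
noncomputable def pick (hN : 0 < N) (q : ℕ) : Fin N :=
  if h : (S.filter (fun i => q < loSum x S i + x i)).Nonempty
    then (S.filter (fun i => q < loSum x S i + x i)).min' h else ⟨0, hN⟩

variable {x S}

lemma loSum_add_le {i : Fin N} (hi : i ∈ S) : loSum x S i + x i ≤ ∑ i' ∈ S, x i' := by
  have : (insert i (S.filter (fun i' => i' < i))) ⊆ S := by
    intro j hj; rcases Finset.mem_insert.mp hj with h | h
    · exact h ▸ hi
    · exact (Finset.mem_filter.mp h).1
  calc loSum x S i + x i = ∑ i' ∈ insert i (S.filter (fun i' => i' < i)), x i' := by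
        rw [Finset.sum_insert (by simp), add_comm]; rfl
    _ ≤ ∑ i' ∈ S, x i' := Finset.sum_le_sum_of_subset this

lemma loSum_mono {i i' : Fin N} (hi : i ∈ S) (h : i < i') :
    loSum x S i + x i ≤ loSum x S i' := by
  have : (insert i (S.filter (fun j => j < i))) ⊆ S.filter (fun j => j < i') := by
    intro j hj; rcases Finset.mem_insert.mp hj with hj | hj
    · subst hj; exact Finset.mem_filter.mpr ⟨hi, h⟩
    · rcases Finset.mem_filter.mp hj with ⟨h1, h2⟩
      exact Finset.mem_filter.mpr ⟨h1, lt_trans h2 h⟩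
  calc loSum x S i + x i = ∑ i' ∈ insert i (S.filter (fun j => j < i)), x i' := by
        rw [Finset.sum_insert (by simp), add_comm]; rfl
    _ ≤ _ := Finset.sum_le_sum_of_subset this

lemma pick_spec (hN : 0 < N) {q : ℕ} (hq : q < ∑ i' ∈ S, x i') :
    pick x S hN q ∈ S ∧ loSum x S (pick x S hN q) ≤ q ∧
      q < loSum x S (pick x S hN q) + x (pick x S hN q) := by
  have hSne : S.Nonempty := by
    rcases Finset.eq_empty_or_nonempty S with h | h
    · subst h; simp at hq
    · exact h
  have hmax := S.max'_mem hSne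
  have hne : (S.filter (fun i => q < loSum x S i + x i)).Nonempty := by
    refine ⟨S.max' hSne, Finset.mem_filter.mpr ⟨hmax, ?_⟩⟩
    have : ∑ i' ∈ S, x i' ≤ loSum x S (S.max' hSne) + x (S.max' hSne) := by
      have hsub : S ⊆ insert (S.max' hSne) (S.filter (fun j => j < S.max' hSne)) := by
        intro j hj
        rcases lt_or_eq_of_le (S.le_max' j hj) with h | h
        · exact Finset.mem_insert.mpr (Or.inr (Finset.mem_filter.mpr ⟨hj, h⟩))
        · exact Finset.mem_insert.mpr (Or.inl h)
      calc ∑ i' ∈ S, x i' ≤ ∑ i' ∈ insert (S.max' hSne) (S.filter (fun j => j < S.max' hSne)), x i' :=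
            Finset.sum_le_sum_of_subset hsub
        _ = loSum x S (S.max' hSne) + x (S.max' hSne) := by
            rw [Finset.sum_insert (by simp), add_comm]; rfl
    omega
  rw [pick, dif_pos hne]
  set m := (S.filter (fun i => q < loSum x S i + x i)).min' hne with hm
  have hmem := (S.filter (fun i => q < loSum x S i + x i)).min'_mem hne
  rw [← hm] at hmem
  rcases Finset.mem_filter.mp hmem with ⟨hmS, hmub⟩
  refine ⟨hmS, ?_, hmub⟩
  -- show loSum x S m ≤ q
  by_contra hcon
  push_neg at hcon
  -- then the set S ∩ {< m} is nonempty, its max m1 satisfies q < loSum m1 + x m1, contradicting min'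
  have hne2 : (S.filter (fun j => j < m)).Nonempty := by
    rcases Finset.eq_empty_or_nonempty (S.filter (fun j => j < m)) with h | h
    · exfalso; rw [loSum, h] at hcon; simp at hcon
    · exact h
  set m1 := (S.filter (fun j => j < m)).max' hne2 with hm1
  have hm1mem := (S.filter (fun j => j < m)).max'_mem hne2
  rw [← hm1] at hm1mem
  rcases Finset.mem_filter.mp hm1mem with ⟨hm1S, hm1lt⟩
  have hsum_eq : loSum x S m ≤ loSum x S m1 + x m1 := by
    have hsub : S.filter (fun j => j < m) ⊆ insert m1 (S.filter (fun j => j < m1)) := by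
      intro j hj
      rcases Finset.mem_filter.mp hj with ⟨hjS, hjlt⟩
      rcases lt_or_eq_of_le ((S.filter (fun j => j < m)).le_max' j hj) with h | h
      · exact Finset.mem_insert.mpr (Or.inr (Finset.mem_filter.mpr ⟨hjS, h⟩))
      · exact Finset.mem_insert.mpr (Or.inl h)
    calc loSum x S m ≤ ∑ i' ∈ insert m1 (S.filter (fun j => j < m1)), x i' :=
          Finset.sum_le_sum_of_subset hsub
      _ = loSum x S m1 + x m1 := by rw [Finset.sum_insert (by simp), add_comm]; rfl
  have : q < loSum x S m1 + x m1 := lt_of_lt_of_le hcon hsum_eq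
  have : m ≤ m1 := (S.filter (fun i => q < loSum x S i + x i)).min'_le m1
    (Finset.mem_filter.mpr ⟨hm1S, this⟩)
  exact absurd hm1lt (not_lt.mpr this)

lemma pick_unique (hN : 0 < N) {q : ℕ} (hq : q < ∑ i' ∈ S, x i')
    {i : Fin N} (hi : i ∈ S) (h1 : loSum x S i ≤ q) (h2 : q < loSum x S i + x i) :
    pick x S hN q = i := by
  obtain ⟨hmS, hmlo, hmhi⟩ := pick_spec hN hq (S := S) (x := x)
  set m := pick x S hN q
  rcases lt_trichotomy m i with h | h | h
  · have := loSum_mono (x := x) hmS h; omega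
  · exact h
  · have := loSum_mono (x := x) hi h; omega


section Constr

variable (n B : ℕ) (x : Fin (3 * n) → ℕ) (p : Fin (3 * n) → Fin n)

def Sp (t : Fin n) : Finset (Fin (3 * n)) := Finset.univ.filter (fun i => p i = t)

/-- fiber of `p` over `s`, indexed by a plain natural number. -/
def Sp' (s : ℕ) : Finset (Fin (3 * n)) := Finset.univ.filter (fun i => (p i).val = s)

noncomputable def mkOwner (hn : 0 < n) (hB : 0 < B)
    (j : Fin (B * (n * B) + n * (n * B + B))) :
    (Fin (B + n) × Fin (n * B)) ⊕ Fin (3 * n) :=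
  if h1 : j.val < B * (n * B) then
    .inl (⟨j.val / (n * B),
        lt_of_lt_of_le ((Nat.div_lt_iff_lt_mul (Nat.mul_pos hn hB)).mpr h1)
          (Nat.le_add_right _ _)⟩,
      ⟨j.val % (n * B), Nat.mod_lt _ (Nat.mul_pos hn hB)⟩)
  else
    if h2 : (j.val - B * (n * B)) % (n * B + B) < n * B then
      .inl (⟨B + (j.val - B * (n * B)) / (n * B + B), by
          have hj := j.isLt
          have h3 : j.val - B * (n * B) < n * (n * B + B) := by omega
          have h4 := (Nat.div_lt_iff_lt_mul (show 0 < n * B + B by positivity)).mpr h3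
          omega⟩,
        ⟨(j.val - B * (n * B)) % (n * B + B), h2⟩)
    else
      .inr (pick x (Sp' n p ((j.val - B * (n * B)) / (n * B + B)))
        (by omega) ((j.val - B * (n * B)) % (n * B + B) - n * B))

def istart (i : Fin (3 * n)) : ℕ :=
  B * (n * B) + (p i).val * (n * B + B) + n * B + loSum x (Sp n p (p i)) i

variable {n B x p}

lemma mkOwner_inl_iff (hn : 0 < n) (hB : 0 < B)
    (j : Fin (B * (n * B) + n * (n * B + B))) (t : Fin (B + n)) (r : Fin (n * B)) :
    mkOwner n B x p hn hB j = .inl (t, r) ↔ j.val = kBlockStart n B t + r.val := by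
  have hKpos : 0 < n * B := Nat.mul_pos hn hB
  have hKB : 0 < n * B + B := by omega
  unfold mkOwner
  split_ifs with h1 h2
  · -- left region
    simp only [Sum.inl.injEq, Prod.mk.injEq, Fin.ext_iff, Fin.val_mk]
    constructor
    · rintro ⟨ht, hr⟩
      have htB : t.val < B := by
        rw [← ht]; exact (Nat.div_lt_iff_lt_mul hKpos).mpr h1
      rw [kBlockStart, if_pos htB, ← ht, ← hr]
      exact (Nat.div_add_mod' _ _).symm
    · intro h
      by_cases htB : t.val < B
      · rw [kBlockStart, if_pos htB] at h
        constructor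
        · rw [h, mul_comm (t.val), Nat.mul_add_div hKpos, Nat.div_eq_of_lt r.isLt,
            add_zero]
        · rw [h, mul_comm (t.val), Nat.mul_add_mod, Nat.mod_eq_of_lt r.isLt]
      · exfalso
        rw [kBlockStart, if_neg htB] at h
        omega
  · -- K-block of right region
    have hne1 : B * (n * B) ≤ j.val := le_of_not_gt h1
    have hu := Nat.div_add_mod (j.val - B * (n * B)) (n * B + B)
    simp only [Sum.inl.injEq, Prod.mk.injEq, Fin.ext_iff, Fin.val_mk]
    constructor
    · rintro ⟨ht, hr⟩
      generalize hdv : (j.val - B * (n * B)) / (n * B + B) = dv at ht hu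
      generalize hmd : (j.val - B * (n * B)) % (n * B + B) = md at hr hu
      have htB : ¬ t.val < B := by omega
      rw [kBlockStart, if_neg htB]
      have h5 : (t.val - B) * (n * B + B) = (n * B + B) * dv := by
        rw [show t.val - B = dv from by omega]; exact mul_comm _ _
      omega
    · intro h
      by_cases htB : t.val < B
      · exfalso
        rw [kBlockStart, if_pos htB] at h
        have : (t.val + 1) * (n * B) ≤ B * (n * B) := Nat.mul_le_mul_right _ htB
        have : t.val * (n * B) + n * B = (t.val + 1) * (n * B) := by ring
        omega
      · rw [kBlockStart, if_neg htB] at h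
        have hju : j.val - B * (n * B) = (n * B + B) * (t.val - B) + r.val := by
          have : (n * B + B) * (t.val - B) = (t.val - B) * (n * B + B) := mul_comm _ _
          omega
        have hdiv : (j.val - B * (n * B)) / (n * B + B) = t.val - B := by
          rw [hju, Nat.mul_add_div hKB, Nat.div_eq_of_lt (by omega), add_zero]
        have hmod : (j.val - B * (n * B)) % (n * B + B) = r.val := by
          rw [hju, Nat.mul_add_mod, Nat.mod_eq_of_lt (by omega)]
        refine ⟨?_, hmod⟩
        rw [hdiv]; omega
  · -- free region: both sides false
    simp only [reduceCtorEq, false_iff]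
    have hne1 : B * (n * B) ≤ j.val := le_of_not_gt h1
    intro h
    by_cases htB : t.val < B
    · rw [kBlockStart, if_pos htB] at h
      have : (t.val + 1) * (n * B) ≤ B * (n * B) := Nat.mul_le_mul_right _ htB
      have : t.val * (n * B) + n * B = (t.val + 1) * (n * B) := by ring
      omega
    · rw [kBlockStart, if_neg htB] at h
      have hju : j.val - B * (n * B) = (n * B + B) * (t.val - B) + r.val := by
        have : (n * B + B) * (t.val - B) = (t.val - B) * (n * B + B) := mul_comm _ _
        omega
      have hmod : (j.val - B * (n * B)) % (n * B + B) = r.val := by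
        rw [hju, Nat.mul_add_mod, Nat.mod_eq_of_lt (by omega)]
      rw [hmod] at h2
      exact absurd r.isLt h2

lemma mkOwner_inr_iff (hn : 0 < n) (hB : 0 < B)
    (hsol : ∀ t : Fin n, ∑ i ∈ Sp n p t, x i = B)
    (j : Fin (B * (n * B) + n * (n * B + B))) (i : Fin (3 * n)) :
    mkOwner n B x p hn hB j = .inr i ↔
      istart n B x p i ≤ j.val ∧ j.val < istart n B x p i + x i := by
  have hKpos : 0 < n * B := Nat.mul_pos hn hB
  have hKB : 0 < n * B + B := by omega
  have hiSp : i ∈ Sp n p (p i) := Finset.mem_filter.mpr ⟨Finset.mem_univ _, rfl⟩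
  have hloB : loSum x (Sp n p (p i)) i + x i ≤ B := by
    have := loSum_add_le (x := x) hiSp
    rwa [hsol (p i)] at this
  have hcomm : (p i).val * (n * B + B) = (n * B + B) * (p i).val := mul_comm _ _
  unfold mkOwner
  split_ifs with h1 h2
  · simp only [reduceCtorEq, false_iff]
    rw [istart]; omega
  · -- in a right-region K-block: RHS must be false
    simp only [reduceCtorEq, false_iff]
    rw [istart]
    rintro ⟨hlo, hhi⟩
    have hne1 : B * (n * B) ≤ j.val := le_of_not_gt h1
    have hu := Nat.div_add_mod (j.val - B * (n * B)) (n * B + B)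
    have hdiv : (j.val - B * (n * B)) / (n * B + B) = (p i).val := by
      apply Nat.div_eq_of_lt_le
      · omega
      · have : ((p i).val + 1) * (n * B + B) = (p i).val * (n * B + B) + (n * B + B) := by
          ring
        omega
    rw [hdiv] at hu
    generalize hmd : (j.val - B * (n * B)) % (n * B + B) = md at h2 hu
    omega
  · -- free region
    have hN0 : 0 < 3 * n := by omega
    have hne1 : B * (n * B) ≤ j.val := le_of_not_gt h1
    have hu := Nat.div_add_mod (j.val - B * (n * B)) (n * B + B)
    have hr2 : (j.val - B * (n * B)) % (n * B + B) < n * B + B :=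
      Nat.mod_lt _ (by omega)
    have hj := j.isLt
    have hsn' : (j.val - B * (n * B)) / (n * B + B) < n := by
      have h3 : j.val - B * (n * B) < n * (n * B + B) := by omega
      exact (Nat.div_lt_iff_lt_mul hKB).mpr h3
    obtain ⟨s, hs⟩ : ∃ s, (j.val - B * (n * B)) / (n * B + B) = s := ⟨_, rfl⟩
    obtain ⟨r0, hr0⟩ : ∃ r0, (j.val - B * (n * B)) % (n * B + B) = r0 := ⟨_, rfl⟩
    rw [hs, hr0] at hu ⊢
    rw [hr0] at h2 hr2
    rw [hs] at hsn'
    have hq : r0 - n * B < ∑ i' ∈ Sp' n p s, x i' := by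
      have hSp : Sp' n p s = Sp n p ⟨s, hsn'⟩ := by
        ext i'; simp [Sp', Sp, Fin.ext_iff]
      rw [hSp, hsol]; omega
    constructor
    · intro h
      have h' : pick x (Sp' n p s) hN0 (r0 - n * B) = i := by
        injection h
      obtain ⟨hmS, hmlo, hmhi⟩ := pick_spec hN0 hq
      rw [h'] at hmS hmlo hmhi
      have hpS : (p i).val = s := (Finset.mem_filter.mp hmS).2
      have hSp2 : Sp n p (p i) = Sp' n p s := by
        ext i'; simp [Sp', Sp, Fin.ext_iff, hpS]
      rw [istart, hSp2, hpS]
      have : s * (n * B + B) = (n * B + B) * s := mul_comm _ _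
      omega
    · rintro ⟨hlo, hhi⟩
      rw [istart] at hlo hhi
      have hdiv : s = (p i).val := by
        rw [← hs]
        apply Nat.div_eq_of_lt_le
        · omega
        · have : ((p i).val + 1) * (n * B + B)
              = (p i).val * (n * B + B) + (n * B + B) := by ring
          omega
      have hSp2 : Sp n p (p i) = Sp' n p s := by
        ext i'; simp [Sp', Sp, Fin.ext_iff, hdiv.symm]
      rw [hSp2] at hloB hiSp
      rw [← hdiv] at hlo hhi
      rw [hSp2] at hlo hhi
      have hcomm2 : s * (n * B + B) = (n * B + B) * s := mul_comm _ _
      have hql : loSum x (Sp' n p s) i ≤ r0 - n * B := by omega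
      have hqh : r0 - n * B < loSum x (Sp' n p s) i + x i := by omega
      exact congrArg Sum.inr (pick_unique hN0 hq hiSp hql hqh)

end Constr

lemma discVal_def {M : ℕ} {A : Type*} (V : A → Finset (Fin M)) (owner : Fin M → A)
    (a b : A) [DecidablePred fun t : Fin M => owner t = b] :
    discVal V owner a b
      = (((V a).filter fun t => owner t = b).card : ℝ) / ((V a).card : ℝ) := by
  unfold discVal
  rw [Finset.filter_congr_decidable]

section Values

variable {n B : ℕ} {x : Fin (3 * n) → ℕ} {p : Fin (3 * n) → Fin n}

lemma kBS_add_le (hn : 0 < n) (hB : 0 < B) (t : Fin (B + n)) :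
    kBlockStart n B t + n * B ≤ B * (n * B) + n * (n * B + B) := by
  rw [kBlockStart]; split_ifs with h
  · have h1 : (t.val + 1) * (n * B) ≤ B * (n * B) := Nat.mul_le_mul_right _ h
    have h2 : t.val * (n * B) + n * B = (t.val + 1) * (n * B) := by ring
    omega
  · have ht := t.isLt
    have h1 : (t.val - B + 1) * (n * B + B) ≤ n * (n * B + B) :=
      Nat.mul_le_mul_right _ (by omega)
    have h2 : (t.val - B) * (n * B + B) + (n * B + B) = (t.val - B + 1) * (n * B + B) := by
      ring
    omega

lemma card_V_inl (hn : 0 < n) (hB : 0 < B) (t : Fin (B + n)) (r : Fin (n * B)) :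
    (equitV n B x (.inl (t, r))).card = n * B := by
  show (Finset.univ.filter fun j : Fin (B * (n * B) + n * (n * B + B)) =>
      kBlockStart n B t ≤ j.val ∧ j.val < kBlockStart n B t + n * B).card = n * B
  rw [card_interval (kBS_add_le hn hB t)]
  omega

lemma card_V_inr (hn : 0 < n) (hB : 0 < B) (i : Fin (3 * n)) (hxB : x i ≤ B) :
    (equitV n B x (.inr i)).card = n * B * x i := by
  show (Finset.univ.filter fun j : Fin (B * (n * B) + n * (n * B + B)) =>
      B * (n * B) + n * (n * B + B) - n * B * x i ≤ j.val).card = n * B * x i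
  rw [card_tail]
  have h1 : n * B * x i ≤ n * B * B := Nat.mul_le_mul_left _ hxB
  have h2 : n * B * B = B * (n * B) := by ring
  omega

lemma istart_bounds (hn : 0 < n) (hB : 0 < B)
    (hsol : ∀ t : Fin n, ∑ i ∈ Sp n p t, x i = B) (i : Fin (3 * n)) :
    B * (n * B) ≤ istart n B x p i ∧
      istart n B x p i + x i ≤ B * (n * B) + n * (n * B + B) := by
  have hiSp : i ∈ Sp n p (p i) := Finset.mem_filter.mpr ⟨Finset.mem_univ _, rfl⟩
  have hloB : loSum x (Sp n p (p i)) i + x i ≤ B := by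
    have := loSum_add_le (x := x) hiSp
    rwa [hsol (p i)] at this
  have h1 : ((p i).val + 1) * (n * B + B) ≤ n * (n * B + B) :=
    Nat.mul_le_mul_right _ (p i).isLt
  have h2 : (p i).val * (n * B + B) + (n * B + B) = ((p i).val + 1) * (n * B + B) := by
    ring
  rw [istart]
  omega

lemma mkOwner_selfVal (hn : 0 < n) (hB : 0 < B) (hxn : ∀ i, n < x i)
    (hsol : ∀ t : Fin n, ∑ i ∈ Sp n p t, x i = B)
    (a : (Fin (B + n) × Fin (n * B)) ⊕ Fin (3 * n)) :
    discVal (equitV n B x) (mkOwner n B x p hn hB) a a = 1 / ((n * B : ℕ) : ℝ) := by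
  classical
  have hK : 0 < n * B := Nat.mul_pos hn hB
  rw [discVal_def]
  rcases a with ⟨t, r⟩ | i
  · -- block agent
    have hM : kBlockStart n B t + n * B ≤ B * (n * B) + n * (n * B + B) :=
      kBS_add_le hn hB t
    have hr := r.isLt
    have hfe : (equitV n B x (.inl (t, r))).filter
        (fun j => mkOwner n B x p hn hB j = .inl (t, r))
        = {(⟨kBlockStart n B t + r.val, by omega⟩ :
            Fin (B * (n * B) + n * (n * B + B)))} := by
      ext j
      show j ∈ Finset.filter _ (Finset.univ.filter fun j =>
        kBlockStart n B t ≤ j.val ∧ j.val < kBlockStart n B t + n * B) ↔ _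
      simp only [Finset.mem_filter, Finset.mem_univ, true_and, Finset.mem_singleton,
        Fin.ext_iff, mkOwner_inl_iff hn hB]
      constructor
      · rintro ⟨_, h⟩; exact h
      · intro h; exact ⟨⟨by omega, by omega⟩, h⟩
    rw [hfe, Finset.card_singleton, card_V_inl hn hB]
    norm_num
  · -- the agent a_i
    have hiSp : i ∈ Sp n p (p i) := Finset.mem_filter.mpr ⟨Finset.mem_univ _, rfl⟩
    have hxB : x i ≤ B := by
      have h := Finset.single_le_sum (f := x) (fun j _ => Nat.zero_le _) hiSp
      rwa [hsol (p i)] at h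
    have hib := istart_bounds hn hB hsol i
    have hfe : (equitV n B x (.inr i)).filter (fun j => mkOwner n B x p hn hB j = .inr i)
        = Finset.univ.filter (fun j : Fin (B * (n * B) + n * (n * B + B)) =>
            istart n B x p i ≤ j.val ∧ j.val < istart n B x p i + x i) := by
      ext j
      show j ∈ Finset.filter _ (Finset.univ.filter fun j =>
        B * (n * B) + n * (n * B + B) - n * B * x i ≤ j.val) ↔ _
      simp only [Finset.mem_filter, Finset.mem_univ, true_and,
        mkOwner_inr_iff hn hB hsol]
      have hsub : B * (n * B) + n * (n * B + B) - n * B * x i ≤ B * (n * B) := by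
        have e1 : n * (n * B + B) = n * B * (n + 1) := by ring
        have e2 : n * B * (n + 1) ≤ n * B * x i := Nat.mul_le_mul_left _ (hxn i)
        omega
      constructor
      · rintro ⟨_, h⟩; exact h
      · intro h; exact ⟨by omega, h⟩
    rw [hfe, card_interval hib.2, card_V_inr hn hB i hxB]
    have he : istart n B x p i + x i - istart n B x p i = x i := by omega
    rw [he]
    have h1' : (0:ℝ) < (n:ℝ) * (B:ℝ) := by exact_mod_cast hK
    have h2 : (0:ℝ) < (x i : ℝ) := by exact_mod_cast lt_trans hn (hxn i)
    push_cast
    rw [div_eq_div_iff (ne_of_gt (mul_pos h1' h2)) (ne_of_gt h1')]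
    ring

end Values

section Constr2

variable {n B : ℕ} {x : Fin (3 * n) → ℕ} {p : Fin (3 * n) → Fin n}

lemma mkOwner_contig (hn : 0 < n) (hB : 0 < B)
    (hsol : ∀ t : Fin n, ∑ i ∈ Sp n p t, x i = B) :
    ContigAlloc (mkOwner n B x p hn hB) := by
  rintro (⟨t, r⟩ | i) t₁ t₂ t₃ h12 h23 e1 e3
  · rw [mkOwner_inl_iff hn hB] at e1 e3 ⊢
    have h12' := Fin.le_def.mp h12
    have h23' := Fin.le_def.mp h23
    omega
  · rw [mkOwner_inr_iff hn hB hsol] at e1 e3 ⊢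
    have h12' := Fin.le_def.mp h12
    have h23' := Fin.le_def.mp h23
    omega

lemma construction (hn : 0 < n) (hB : 0 < B) (hxn : ∀ i, n < x i)
    (hsol : ∀ t : Fin n, ∑ i ∈ Sp n p t, x i = B) :
    ∃ owner : Fin (B * (n * B) + n * (n * B + B)) →
        ((Fin (B + n) × Fin (n * B)) ⊕ Fin (3 * n)),
      ContigAlloc owner ∧
      (∀ a, discVal (equitV n B x) owner a a = 1 / ((n * B : ℕ) : ℝ)) := by
  exact ⟨mkOwner n B x p hn hB, mkOwner_contig hn hB hsol,
    mkOwner_selfVal hn hB hxn hsol⟩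

end Constr2

section Extraction

variable {n B : ℕ} {x : Fin (3 * n) → ℕ}

lemma item_cases (hn : 0 < n) (hB : 0 < B) (j : Fin (B * (n * B) + n * (n * B + B))) :
    (∃ t : Fin (B + n), kBlockStart n B t ≤ j.val ∧ j.val < kBlockStart n B t + n * B) ∨
    (∃ s : ℕ, s < n ∧ B * (n * B) + s * (n * B + B) + n * B ≤ j.val ∧
      j.val < B * (n * B) + (s + 1) * (n * B + B)) := by
  have hK : 0 < n * B := Nat.mul_pos hn hB
  have hj := j.isLt
  by_cases h1 : j.val < B * (n * B)
  · left
    obtain ⟨dv, hdv⟩ : ∃ d, j.val / (n * B) = d := ⟨_, rfl⟩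
    obtain ⟨md, hmd⟩ : ∃ m, j.val % (n * B) = m := ⟨_, rfl⟩
    have hdm : (n * B) * dv + md = j.val := by
      rw [← hdv, ← hmd]; exact Nat.div_add_mod _ _
    have hmlt : md < n * B := by rw [← hmd]; exact Nat.mod_lt _ hK
    have hd : dv < B := by rw [← hdv]; exact (Nat.div_lt_iff_lt_mul hK).mpr h1
    have hco : dv * (n * B) = (n * B) * dv := mul_comm _ _
    refine ⟨⟨dv, by omega⟩, ?_, ?_⟩ <;>
      simp only [kBlockStart, Fin.val_mk] <;> rw [if_pos hd] <;> omega
  · obtain ⟨s, hs⟩ : ∃ s, (j.val - B * (n * B)) / (n * B + B) = s := ⟨_, rfl⟩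
    obtain ⟨r0, hr0⟩ : ∃ r, (j.val - B * (n * B)) % (n * B + B) = r := ⟨_, rfl⟩
    have hu : (n * B + B) * s + r0 = j.val - B * (n * B) := by
      rw [← hs, ← hr0]; exact Nat.div_add_mod _ _
    have hrlt : r0 < n * B + B := by rw [← hr0]; exact Nat.mod_lt _ (by omega)
    have hsn : s < n := by
      rw [← hs]; exact (Nat.div_lt_iff_lt_mul (by omega)).mpr (by omega)
    by_cases h2 : r0 < n * B
    · left
      have hco : (B + s - B) * (n * B + B) = (n * B + B) * s := by
        rw [show B + s - B = s by omega]; exact mul_comm _ _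
      refine ⟨⟨B + s, by omega⟩, ?_, ?_⟩ <;>
        simp only [kBlockStart, Fin.val_mk] <;>
        rw [if_neg (by omega : ¬ B + s < B)] <;> omega
    · right
      have hco : s * (n * B + B) = (n * B + B) * s := mul_comm _ _
      have hco2 : (s + 1) * (n * B + B) = (n * B + B) * s + (n * B + B) := by ring
      exact ⟨s, hsn, by omega, by omega⟩

lemma extraction (hn : 0 < n) (hB : 0 < B)
    (hpos : ∀ i, 0 < x i) (hsum : ∑ i, x i = n * B)
    (hlb : ∀ i, B < 4 * x i) (hub : ∀ i, 2 * x i < B) (hxn : ∀ i, n < x i)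
    (owner : Fin (B * (n * B) + n * (n * B + B)) →
        ((Fin (B + n) × Fin (n * B)) ⊕ Fin (3 * n)))
    (hc : ContigAlloc owner)
    (heq : ∀ a b, discVal (equitV n B x) owner a a = discVal (equitV n B x) owner b b)
    (hone : ∃ a, 0 < discVal (equitV n B x) owner a a) :
    ∃ p : Fin (3 * n) → Fin n, ∀ t : Fin n,
      (Finset.univ.filter fun i => p i = t).card = 3 ∧
      ∑ i ∈ Finset.univ.filter (fun i => p i = t), x i = B := by
  classical
  have hK : 0 < n * B := Nat.mul_pos hn hB
  have hnB0 : ((n * B : ℕ) : ℝ) ≠ 0 := by exact_mod_cast hK.ne'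
  have hpos_all : ∀ a, 0 < discVal (equitV n B x) owner a a := by
    obtain ⟨a₀, ha₀⟩ := hone
    intro a; rw [heq a a₀]; exact ha₀
  -- all block agents receive the same number m of own-block items
  have hmc_blk : ∀ (t t' : Fin (B + n)) (r r' : Fin (n * B)),
      ((equitV n B x (.inl (t, r))).filter (fun j => owner j = .inl (t, r))).card
        = ((equitV n B x (.inl (t', r'))).filter
            (fun j => owner j = .inl (t', r'))).card := by
    intro t t' r r'
    have h := heq (.inl (t, r)) (.inl (t', r'))
    rw [discVal_def, discVal_def, card_V_inl hn hB, card_V_inl hn hB] at h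
    field_simp at h
    exact_mod_cast h
  set t₀ : Fin (B + n) := ⟨0, by omega⟩ with ht₀
  set r₀ : Fin (n * B) := ⟨0, hK⟩ with hr₀
  set m : ℕ := ((equitV n B x (.inl (t₀, r₀))).filter
      (fun j => owner j = .inl (t₀, r₀))).card with hmdef
  -- the per-block disjoint union computation
  have key : ∀ t : Fin (B + n),
      (Finset.univ.biUnion (fun r : Fin (n * B) =>
        (equitV n B x (.inl (t, r))).filter (fun j => owner j = .inl (t, r))))
          ⊆ equitV n B x (.inl (t, r₀)) ∧
      (Finset.univ.biUnion (fun r : Fin (n * B) =>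
        (equitV n B x (.inl (t, r))).filter
          (fun j => owner j = .inl (t, r)))).card = (n * B) * m := by
    intro t
    have hdisj : ∀ r ∈ (Finset.univ : Finset (Fin (n * B))), ∀ r' ∈ Finset.univ,
        r ≠ r' → Disjoint
          ((equitV n B x (.inl (t, r))).filter (fun j => owner j = .inl (t, r)))
          ((equitV n B x (.inl (t, r'))).filter (fun j => owner j = .inl (t, r'))) := by
      intro r _ r' _ hrr
      rw [Finset.disjoint_left]
      intro j hj hj'
      have h1 := (Finset.mem_filter.mp hj).2
      have h2 := (Finset.mem_filter.mp hj').2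
      rw [h1] at h2
      simp only [Sum.inl.injEq, Prod.mk.injEq] at h2
      exact hrr h2.2
    constructor
    · intro j hj
      obtain ⟨r, -, hjr⟩ := Finset.mem_biUnion.mp hj
      exact (Finset.mem_filter.mp hjr).1
    · rw [Finset.card_biUnion hdisj]
      rw [Finset.sum_congr rfl (fun r _ => hmc_blk t t₀ r r₀), Finset.sum_const,
        Finset.card_univ, Fintype.card_fin, smul_eq_mul]
  have hm1 : m = 1 := by
    have h1 := Finset.card_le_card (key t₀).1
    rw [(key t₀).2, card_V_inl hn hB] at h1
    have h2 : 0 < m := by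
      have h3 := hpos_all (.inl (t₀, r₀))
      rw [discVal_def, card_V_inl hn hB] at h3
      rw [← hmdef] at h3
      by_contra h0
      push_neg at h0
      rw [Nat.le_zero.mp h0] at h3
      norm_num at h3
    have h4 : (n * B) * m ≤ (n * B) * 1 := by omega
    have := Nat.le_of_mul_le_mul_left h4 hK
    omega
  -- every item of every K-block is owned by an agent of that block
  have hcover : ∀ (t : Fin (B + n)) (j : Fin (B * (n * B) + n * (n * B + B))),
      kBlockStart n B t ≤ j.val → j.val < kBlockStart n B t + n * B →
      ∃ r, owner j = .inl (t, r) := by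
    intro t j h1 h2
    have hsub := (key t).1
    have hcard := (key t).2
    rw [hm1, mul_one] at hcard
    have hVcard : (equitV n B x (.inl (t, r₀))).card = n * B := card_V_inl hn hB t r₀
    have heqset := Finset.eq_of_subset_of_card_le hsub (by rw [hcard, hVcard])
    have hjV : j ∈ equitV n B x (.inl (t, r₀)) := by
      show j ∈ Finset.univ.filter _
      simp only [Finset.mem_filter, Finset.mem_univ, true_and]
      exact ⟨h1, h2⟩
    rw [← heqset] at hjV
    obtain ⟨r, -, hjr⟩ := Finset.mem_biUnion.mp hjV
    exact ⟨r, (Finset.mem_filter.mp hjr).2⟩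
  -- each agent a_i receives exactly x i valued items
  have hmcx : ∀ i : Fin (3 * n),
      ((equitV n B x (.inr i)).filter (fun j => owner j = .inr i)).card = x i := by
    intro i
    have hxB : x i ≤ B := by have := hub i; omega
    have h := heq (.inr i) (.inl (t₀, r₀))
    rw [discVal_def, discVal_def, card_V_inr hn hB i hxB, card_V_inl hn hB] at h
    rw [← hmdef, hm1] at h
    have hx0 : ((x i : ℕ) : ℝ) ≠ 0 := by exact_mod_cast (hpos i).ne'
    have hd0 : ((n * B * x i : ℕ) : ℝ) ≠ 0 := by
      push_cast
      exact mul_ne_zero (by exact_mod_cast hK.ne') hx0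
    rw [div_eq_div_iff hd0 hnB0] at h
    have h' : ((equitV n B x (.inr i)).filter (fun j => owner j = .inr i)).card * (n * B)
        = 1 * (n * B * x i) := by exact_mod_cast h
    have h'' : (n * B) * ((equitV n B x (.inr i)).filter
        (fun j => owner j = .inr i)).card = (n * B) * x i := by
      calc (n * B) * ((equitV n B x (.inr i)).filter
            (fun j => owner j = .inr i)).card
          = ((equitV n B x (.inr i)).filter
            (fun j => owner j = .inr i)).card * (n * B) := mul_comm _ _
        _ = 1 * (n * B * x i) := h'
        _ = (n * B) * x i := by ring
    exact Nat.eq_of_mul_eq_mul_left hK h''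
  -- every item owned by an a_i is a free item of some run
  have hfree : ∀ (i : Fin (3 * n)) (j : Fin (B * (n * B) + n * (n * B + B))),
      owner j = .inr i → ∃ s : ℕ, s < n ∧
        B * (n * B) + s * (n * B + B) + n * B ≤ j.val ∧
        j.val < B * (n * B) + (s + 1) * (n * B + B) := by
    intro i j hj
    rcases item_cases hn hB j with ⟨t, hb1, hb2⟩ | hf
    · obtain ⟨r, hr⟩ := hcover t j hb1 hb2
      rw [hj] at hr
      exact absurd hr (by simp)
    · exact hf
  -- two items owned by the same a_i lie in the same run
  have haux : ∀ (i : Fin (3 * n)) (j j' : Fin (B * (n * B) + n * (n * B + B)))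
      (s s' : ℕ), s' < n → owner j = .inr i → owner j' = .inr i →
      j.val < B * (n * B) + (s + 1) * (n * B + B) → s < s' →
      B * (n * B) + s' * (n * B + B) + n * B ≤ j'.val → False := by
    intro i j j' s s' hs'n hj hj' hjlt hss hj'lo
    have hwle : (s' + 1) * (n * B + B) ≤ n * (n * B + B) := Nat.mul_le_mul_right _ (by omega)
    have hco : (s' + 1) * (n * B + B) = s' * (n * B + B) + (n * B + B) := by ring
    have hco2 : (s + 1) * (n * B + B) ≤ s' * (n * B + B) := Nat.mul_le_mul_right _ (by omega)
    obtain ⟨w, hwval⟩ : ∃ w : Fin (B * (n * B) + n * (n * B + B)),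
        w.val = B * (n * B) + s' * (n * B + B) := ⟨⟨_, by omega⟩, rfl⟩
    have h1 : j ≤ w := by rw [Fin.le_def, hwval]; omega
    have h2 : w ≤ j' := by rw [Fin.le_def, hwval]; omega
    have hin := hc (.inr i) j w j' h1 h2 hj hj'
    have hb1 : B + s' < B + n := by omega
    have hkbs : kBlockStart n B (⟨B + s', hb1⟩ : Fin (B + n))
        = B * (n * B) + s' * (n * B + B) := by
      simp only [kBlockStart, Fin.val_mk]
      rw [if_neg (by omega : ¬ B + s' < B), show B + s' - B = s' by omega]
    obtain ⟨r, hr⟩ := hcover ⟨B + s', hb1⟩ w (le_of_eq (by rw [hkbs, hwval]))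
      (by rw [hkbs, hwval]; omega)
    rw [hin] at hr
    exact absurd hr (by simp)
  -- select the run of each agent a_i
  have hchoice : ∀ i : Fin (3 * n), ∃ st : Fin n,
      ∀ j, owner j = .inr i →
        B * (n * B) + st.val * (n * B + B) + n * B ≤ j.val ∧
        j.val < B * (n * B) + (st.val + 1) * (n * B + B) := by
    intro i
    have hGne : ((equitV n B x (.inr i)).filter (fun j => owner j = .inr i)).Nonempty := by
      rw [← Finset.card_pos, hmcx i]; exact hpos i
    obtain ⟨j0, hj0⟩ := hGne
    have hj0o : owner j0 = .inr i := (Finset.mem_filter.mp hj0).2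
    obtain ⟨s0, hs0n, hlo0, hhi0⟩ := hfree i j0 hj0o
    refine ⟨⟨s0, hs0n⟩, fun j hj => ?_⟩
    obtain ⟨s', hs'n, hlo', hhi'⟩ := hfree i j hj
    have hss : s' = s0 := by
      rcases lt_trichotomy s' s0 with h | h | h
      · exact (haux i j j0 s' s0 hs0n hj hj0o hhi' h hlo0).elim
      · exact h
      · exact (haux i j0 j s0 s' hs'n hj0o hj hhi0 h hlo').elim
    simp only [Fin.val_mk]
    rw [← hss]
    exact ⟨hlo', hhi'⟩
  choose p hp using hchoice
  -- fiber sums are at most B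
  have hle : ∀ t : Fin n, ∑ i ∈ Finset.univ.filter (fun i => p i = t), x i ≤ B := by
    intro t
    have htn : (t.val + 1) * (n * B + B) ≤ n * (n * B + B) :=
      Nat.mul_le_mul_right _ t.isLt
    have hco : (t.val + 1) * (n * B + B) = t.val * (n * B + B) + (n * B + B) := by ring
    have hdisj : ∀ i₁ ∈ Finset.univ.filter (fun i => p i = t),
        ∀ i₂ ∈ Finset.univ.filter (fun i => p i = t), i₁ ≠ i₂ → Disjoint
          ((equitV n B x (.inr i₁)).filter (fun j => owner j = .inr i₁))
          ((equitV n B x (.inr i₂)).filter (fun j => owner j = .inr i₂)) := by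
      intro i₁ _ i₂ _ hne
      rw [Finset.disjoint_left]
      intro j hj hj'
      have h1 := (Finset.mem_filter.mp hj).2
      have h2 := (Finset.mem_filter.mp hj').2
      rw [h1] at h2
      simp only [Sum.inr.injEq] at h2
      exact hne h2
    calc ∑ i ∈ Finset.univ.filter (fun i => p i = t), x i
        = ∑ i ∈ Finset.univ.filter (fun i => p i = t),
            ((equitV n B x (.inr i)).filter (fun j => owner j = .inr i)).card :=
          Finset.sum_congr rfl (fun i _ => (hmcx i).symm)
      _ = ((Finset.univ.filter (fun i => p i = t)).biUnion (fun i =>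
            (equitV n B x (.inr i)).filter (fun j => owner j = .inr i))).card :=
          (Finset.card_biUnion hdisj).symm
      _ ≤ (Finset.univ.filter (fun j : Fin (B * (n * B) + n * (n * B + B)) =>
            B * (n * B) + t.val * (n * B + B) + n * B ≤ j.val ∧
            j.val < B * (n * B) + (t.val + 1) * (n * B + B))).card := by
          apply Finset.card_le_card
          rw [Finset.biUnion_subset]
          intro i hi
          intro j hj
          have hji := (Finset.mem_filter.mp hj).2
          have hpt : p i = t := (Finset.mem_filter.mp hi).2
          have := hp i j hji
          rw [hpt] at this
          simp only [Finset.mem_filter, Finset.mem_univ, true_and]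
          exact this
      _ = B := by
          rw [card_interval (by omega)]
          omega
  -- fiber sums are exactly B
  have hsB : ∀ t : Fin n, ∑ i ∈ Finset.univ.filter (fun i => p i = t), x i = B := by
    have htot : ∑ t : Fin n, ∑ i ∈ Finset.univ.filter (fun i => p i = t), x i
        = n * B := by
      rw [Finset.sum_fiberwise_of_maps_to (fun i _ => Finset.mem_univ (p i)) x]
      exact hsum
    intro t
    by_contra hne
    have hlt : ∑ i ∈ Finset.univ.filter (fun i => p i = t), x i < B :=
      lt_of_le_of_ne (hle t) hne
    have hstrict := Finset.sum_lt_sum (fun t' (_ : t' ∈ Finset.univ) => hle t')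
      ⟨t, Finset.mem_univ _, hlt⟩
    rw [htot, Finset.sum_const, Finset.card_univ, Fintype.card_fin, smul_eq_mul] at hstrict
    omega
  -- fibers have exactly three elements
  have hB3 : 3 ≤ B := by
    have h1 := hub ⟨0, by omega⟩
    have h2 := hpos ⟨0, by omega⟩
    omega
  refine ⟨p, fun t => ⟨?_, hsB t⟩⟩
  have h4 : (Finset.univ.filter (fun i => p i = t)).card * (B + 1) ≤ 4 * B := by
    calc (Finset.univ.filter (fun i => p i = t)).card * (B + 1)
        = (Finset.univ.filter (fun i => p i = t)).card • (B + 1) :=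
          (by rw [smul_eq_mul])
      _ ≤ ∑ i ∈ Finset.univ.filter (fun i => p i = t), 4 * x i :=
          Finset.card_nsmul_le_sum _ _ _ (fun i _ => by have := hlb i; omega)
      _ = 4 * ∑ i ∈ Finset.univ.filter (fun i => p i = t), x i := by
          rw [Finset.mul_sum]
      _ = 4 * B := by rw [hsB t]
  have h5 : 2 * B ≤ (Finset.univ.filter (fun i => p i = t)).card * (B - 1) := by
    calc 2 * B = 2 * ∑ i ∈ Finset.univ.filter (fun i => p i = t), x i := by
          rw [hsB t]
      _ = ∑ i ∈ Finset.univ.filter (fun i => p i = t), 2 * x i := by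
          rw [Finset.mul_sum]
      _ ≤ (Finset.univ.filter (fun i => p i = t)).card • (B - 1) :=
          Finset.sum_le_card_nsmul _ _ _ (fun i _ => by have := hub i; omega)
      _ = (Finset.univ.filter (fun i => p i = t)).card * (B - 1) := by rw [smul_eq_mul]
  have hlt4 : (Finset.univ.filter (fun i => p i = t)).card < 4 := by
    by_contra hge
    push_neg at hge
    have := Nat.mul_le_mul_right (B + 1) hge
    omega
  have hgt2 : 2 < (Finset.univ.filter (fun i => p i = t)).card := by
    by_contra hle2
    push_neg at hle2
    have := Nat.mul_le_mul_right (B - 1) hle2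
    omega
  omega

end Extraction


/-- (i) The discrete instance admits a contiguous equitable allocation
in which every agent receives strictly positive value iff the 3-PARTITION instance has a
solution; (ii) it admits a contiguous allocation that is both proportional and equitable
iff the 3-PARTITION instance has a solution. -/
theorem contiguous_equitable_iff_three_partition
    (n B : ℕ) (hn : 0 < n) (x : Fin (3 * n) → ℕ)
    (hpos : ∀ i, 0 < x i) (hsum : ∑ i, x i = n * B)
    (hlb : ∀ i, B < 4 * x i) (hub : ∀ i, 2 * x i < B) (hxn : ∀ i, n < x i) :
    ((∃ owner : Fin (B * (n * B) + n * (n * B + B)) →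
        ((Fin (B + n) × Fin (n * B)) ⊕ Fin (3 * n)),
      ContigAlloc owner ∧
      (∀ a b, discVal (equitV n B x) owner a a = discVal (equitV n B x) owner b b) ∧
      (∀ a, 0 < discVal (equitV n B x) owner a a)) ↔
    (∃ p : Fin (3 * n) → Fin n, ∀ t : Fin n,
      (Finset.univ.filter fun i => p i = t).card = 3 ∧
      ∑ i ∈ Finset.univ.filter (fun i => p i = t), x i = B)) ∧
    ((∃ owner : Fin (B * (n * B) + n * (n * B + B)) →
        ((Fin (B + n) × Fin (n * B)) ⊕ Fin (3 * n)),
      ContigAlloc owner ∧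
      (∀ a, discVal (equitV n B x) owner a a ≥
        1 / (Fintype.card ((Fin (B + n) × Fin (n * B)) ⊕ Fin (3 * n)) : ℝ)) ∧
      (∀ a b, discVal (equitV n B x) owner a a = discVal (equitV n B x) owner b b)) ↔
    (∃ p : Fin (3 * n) → Fin n, ∀ t : Fin n,
      (Finset.univ.filter fun i => p i = t).card = 3 ∧
      ∑ i ∈ Finset.univ.filter (fun i => p i = t), x i = B)) := by
  have hB : 0 < B := by
    have h1 := hub ⟨0, by omega⟩
    have h2 := hpos ⟨0, by omega⟩
    omega
  have hK : 0 < n * B := Nat.mul_pos hn hB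
  have h0R : (0 : ℝ) < ((n * B : ℕ) : ℝ) := by exact_mod_cast hK
  have hcon : (∃ p : Fin (3 * n) → Fin n, ∀ t : Fin n,
      (Finset.univ.filter fun i => p i = t).card = 3 ∧
      ∑ i ∈ Finset.univ.filter (fun i => p i = t), x i = B) →
      ∃ owner : Fin (B * (n * B) + n * (n * B + B)) →
          ((Fin (B + n) × Fin (n * B)) ⊕ Fin (3 * n)),
        ContigAlloc owner ∧
        (∀ a, discVal (equitV n B x) owner a a = 1 / ((n * B : ℕ) : ℝ)) := by
    rintro ⟨p, hp⟩
    exact construction hn hB hxn (fun t => (hp t).2)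
  have hcardeq : Fintype.card ((Fin (B + n) × Fin (n * B)) ⊕ Fin (3 * n))
      = (B + n) * (n * B) + 3 * n := by
    simp [Fintype.card_sum, Fintype.card_prod, Fintype.card_fin]
  have hcardpos : 0 < Fintype.card ((Fin (B + n) × Fin (n * B)) ⊕ Fin (3 * n)) := by
    rw [hcardeq]; omega
  constructor
  · constructor
    · rintro ⟨owner, hc, heq, hposv⟩
      exact extraction hn hB hpos hsum hlb hub hxn owner hc heq
        ⟨_, hposv (Sum.inr ⟨0, by omega⟩)⟩
    · intro hsol
      obtain ⟨owner, hc, hval⟩ := hcon hsol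
      refine ⟨owner, hc, fun a b => by rw [hval a, hval b], fun a => ?_⟩
      rw [hval a]
      positivity
  · constructor
    · rintro ⟨owner, hc, hprop, heq⟩
      refine extraction hn hB hpos hsum hlb hub hxn owner hc heq
        ⟨Sum.inr ⟨0, by omega⟩, ?_⟩
      refine lt_of_lt_of_le ?_ (hprop (Sum.inr ⟨0, by omega⟩))
      apply one_div_pos.mpr
      exact_mod_cast hcardpos
    · intro hsol
      obtain ⟨owner, hc, hval⟩ := hcon hsol
      refine ⟨owner, hc, fun a => ?_, fun a b => by rw [hval a, hval b]⟩
      rw [hval a]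
      have hle : (n * B : ℕ) ≤ Fintype.card ((Fin (B + n) × Fin (n * B)) ⊕ Fin (3 * n)) := by
        rw [hcardeq]
        have : 1 * (n * B) ≤ (B + n) * (n * B) := Nat.mul_le_mul_right _ (by omega)
        omega
      exact one_div_le_one_div_of_le h0R (by exact_mod_cast hle)
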